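/- For v̄ > 0 and c_low > 0, the map κ ↦ v̄(1 - e^{-κ})/c_low has a unique strictly positive fixed point κ_a(v̄) whenever v̄ > c_low, and κ_a(v̄) is strictly increasing in v̄. -/
import Mathlib

private lemma hfun_mono : StrictMonoOn (fun x : ℝ => x / (1 - Real.exp (-x))) (Set.Ioi 0) := by
  apply strictMonoOn_of_deriv_pos (convex_Ioi 0)
  · apply ContinuousOn.div continuousOn_id
    · exact (continuous_const.sub (Real.continuous_exp.comp continuous_neg)).continuousOn
    · intro x hx
      have : Real.exp (-x) < 1 := Real.exp_lt_one_iff.mpr (by simpa using hx)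
      linarith
  · intro x hx
    rw [interior_Ioi] at hx
    have hx : (0:ℝ) < x := hx
    have hlt : Real.exp (-x) < 1 := Real.exp_lt_one_iff.mpr (by linarith)
    have hne : 1 - Real.exp (-x) ≠ 0 := by linarith
    have hd : HasDerivAt (fun x : ℝ => 1 - Real.exp (-x)) (Real.exp (-x)) x := by
      have := ((Real.hasDerivAt_exp (-x)).comp x (hasDerivAt_neg x)).const_sub 1
      simpa using this
    have hq : HasDerivAt (fun x : ℝ => x / (1 - Real.exp (-x)))
        ((1 * (1 - Real.exp (-x)) - x * Real.exp (-x)) / (1 - Real.exp (-x))^2) x :=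
      (hasDerivAt_id x).div hd hne
    rw [hq.deriv]
    apply div_pos
    · have h1 : x + 1 < Real.exp x := Real.add_one_lt_exp (by linarith)
      have h2 : Real.exp (-x) * Real.exp x = 1 := by
        rw [← Real.exp_add]; simp
      have h3 : 0 < Real.exp (-x) := Real.exp_pos _
      nlinarith
    · positivity

private lemma fixed_eq (clow v κ : ℝ) (hclow : 0 < clow) (hκ : 0 < κ)
    (h : v * (1 - Real.exp (-κ)) / clow = κ) :
    κ / (1 - Real.exp (-κ)) = v / clow := by
  have hlt : Real.exp (-κ) < 1 := Real.exp_lt_one_iff.mpr (by linarith)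
  have hne : 1 - Real.exp (-κ) ≠ 0 := by linarith
  field_simp at h ⊢
  linarith

theorem stmt_10 (clow : ℝ) (hclow : 0 < clow) :
    (∀ v : ℝ, clow < v → ∃! κ, 0 < κ ∧ v * (1 - Real.exp (-κ)) / clow = κ) ∧
    (∀ v₁ v₂ : ℝ, clow < v₁ → v₁ < v₂ →
      ∀ κ₁ κ₂ : ℝ,
        (0 < κ₁ ∧ v₁ * (1 - Real.exp (-κ₁)) / clow = κ₁) →
        (0 < κ₂ ∧ v₂ * (1 - Real.exp (-κ₂)) / clow = κ₂) →
        κ₁ < κ₂) := by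
  constructor
  · intro v hv
    set a : ℝ := v / clow with ha
    have ha1 : 1 < a := (one_lt_div hclow).mpr hv
    have hloga : 0 < Real.log a := Real.log_pos ha1
    set κ₀ : ℝ := Real.log a / 2 with hκ₀
    have hκ₀pos : 0 < κ₀ := by positivity
    have hκ₀a : κ₀ ≤ a := by
      have := Real.log_le_sub_one_of_pos (by linarith : (0:ℝ) < a)
      simp only [hκ₀]; linarith
    -- g κ = a * (1 - exp (-κ)) - κ
    have hcont : ContinuousOn (fun κ => a * (1 - Real.exp (-κ)) - κ) (Set.Icc κ₀ a) :=
      (((continuous_const.mul (continuous_const.sub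
        (Real.continuous_exp.comp continuous_neg))).sub continuous_id)).continuousOn
    have hga : a * (1 - Real.exp (-a)) - a < 0 := by
      have := Real.exp_pos (-a)
      nlinarith
    have hgκ₀ : 0 < a * (1 - Real.exp (-κ₀)) - κ₀ := by
      have h1 : κ₀ + 1 < Real.exp κ₀ := Real.add_one_lt_exp (by linarith)
      have h2 : Real.exp (-κ₀) * Real.exp κ₀ = 1 := by rw [← Real.exp_add]; simp
      have h3 : 0 < Real.exp (-κ₀) := Real.exp_pos _
      -- 1 - exp(-κ₀) > κ₀ * exp(-κ₀)
      have h4 : κ₀ * Real.exp (-κ₀) < 1 - Real.exp (-κ₀) := by nlinarith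
      -- a * exp(-κ₀) > 1 since κ₀ < log a
      have h5 : Real.exp κ₀ < a := by
        have : κ₀ < Real.log a := by simp only [hκ₀]; linarith
        calc Real.exp κ₀ < Real.exp (Real.log a) := Real.exp_lt_exp.mpr this
          _ = a := Real.exp_log (by linarith)
      have h6 : 1 < a * Real.exp (-κ₀) := by nlinarith
      nlinarith
    have := intermediate_value_Icc' hκ₀a hcont
    have hmem : (0:ℝ) ∈ Set.Icc (a * (1 - Real.exp (-a)) - a) (a * (1 - Real.exp (-κ₀)) - κ₀) :=
      ⟨le_of_lt hga, le_of_lt hgκ₀⟩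
    obtain ⟨κ, hκmem, hκeq⟩ := this hmem
    have hκpos : 0 < κ := lt_of_lt_of_le hκ₀pos hκmem.1
    have hκeq' : a * (1 - Real.exp (-κ)) - κ = 0 := hκeq
    have hfix : v * (1 - Real.exp (-κ)) / clow = κ := by
      have h : v * (1 - Real.exp (-κ)) / clow = a * (1 - Real.exp (-κ)) := by
        rw [ha]; ring
      rw [h]; linarith
    refine ⟨κ, ⟨hκpos, hfix⟩, ?_⟩
    rintro κ' ⟨hκ'pos, hfix'⟩
    have e1 := fixed_eq clow v κ' hclow hκ'pos hfix'
    have e2 := fixed_eq clow v κ hclow hκpos hfix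
    exact hfun_mono.injOn (Set.mem_Ioi.mpr hκ'pos) (Set.mem_Ioi.mpr hκpos) (by rw [e1, e2])
  · rintro v₁ v₂ hv₁ hv12 κ₁ κ₂ ⟨hκ₁, hf₁⟩ ⟨hκ₂, hf₂⟩
    have e1 := fixed_eq clow v₁ κ₁ hclow hκ₁ hf₁
    have e2 := fixed_eq clow v₂ κ₂ hclow hκ₂ hf₂
    have hlt : κ₁ / (1 - Real.exp (-κ₁)) < κ₂ / (1 - Real.exp (-κ₂)) := by
      rw [e1, e2]
      exact div_lt_div_of_pos_right hv12 hclow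
    exact (hfun_mono.lt_iff_lt (Set.mem_Ioi.mpr hκ₁) (Set.mem_Ioi.mpr hκ₂)).mp hlt
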